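/- Leading bias of the uncorrected estimator: let q > p > 1 be real and A_n^{(p,q)} = ζ(p)^{q/p} − D_n^{(p,q)}. Then A_n^{(p,q)} − ζ(q) = (q/p) ζ(p)^{q/p − 1} t_n^{(p)} + O(n^{-min(2p−2, q−1)}) as n → ∞, where t_n^{(p)} = ζ(p) − S_n^{(p)}. -/

import Mathlib

open Filter Finset

/-- Partial sum `S_n^{(p)} = ∑_{k=1}^n k^{-p}`. -/
noncomputable def S (p : ℝ) (n : ℕ) : ℝ := ∑ k ∈ Finset.range n, ((k : ℝ) + 1) ^ (-p)

/-- `ζ(s) = ∑_{k=1}^∞ k^{-s}` (as a tsum). -/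
noncomputable def zetaR (s : ℝ) : ℝ := ∑' k : ℕ, ((k : ℝ) + 1) ^ (-s)

/-- Finite deficiency `D_n^{(p,q)} = (S_n^{(p)})^{q/p} - T_n^{(q)}`. -/
noncomputable def D (p q : ℝ) (n : ℕ) : ℝ := (S p n) ^ (q / p) - S q n

lemma summ {s : ℝ} (hs : 1 < s) : Summable (fun k : ℕ => ((k : ℝ) + 1) ^ (-s)) := by
  have h : Summable (fun n : ℕ => (n : ℝ) ^ (-s)) :=
    Real.summable_nat_rpow.mpr (by linarith)
  have := (summable_nat_add_iff 1).mpr h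
  refine this.congr fun k => by push_cast; ring_nf

lemma step {s : ℝ} (hs : 1 < s) {x : ℝ} (hx : 1 ≤ x) :
    ((x : ℝ) + 1) ^ (-s) ≤ (x ^ (1 - s) - (x + 1) ^ (1 - s)) / (s - 1) := by
  have hx0 : 0 < x := by linarith
  have hcont : ContinuousOn (fun u : ℝ => u ^ (1 - s)) (Set.Icc x (x + 1)) := by
    apply ContinuousOn.rpow_const continuousOn_id
    intro u hu; left
    have := hu.1; simp only [id]; intro h; rw [h] at this; linarith
  have hderiv : ∀ u ∈ Set.Ioo x (x + 1),
      HasDerivAt (fun u : ℝ => u ^ (1 - s)) ((1 - s) * u ^ (1 - s - 1)) u := by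
    intro u hu
    exact Real.hasDerivAt_rpow_const (Or.inl (by nlinarith [hu.1]))
  obtain ⟨c, hc, hceq⟩ := exists_hasDerivAt_eq_slope _ _ (by linarith) hcont hderiv
  have hc0 : 0 < c := by linarith [hc.1]
  have hkey : x ^ (1 - s) - (x + 1) ^ (1 - s) = (s - 1) * c ^ (-s) := by
    have h2 : (1 - s - 1 : ℝ) = -s := by ring
    rw [h2] at hceq
    have h3 : (x + 1 - x : ℝ) = 1 := by ring
    rw [h3, div_one] at hceq
    linarith [hceq]
  rw [hkey, mul_comm, mul_div_assoc, div_self (by linarith : (s:ℝ) - 1 ≠ 0), mul_one]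
  exact Real.rpow_le_rpow_of_nonpos hc0 (by linarith [hc.2]) (by linarith)

lemma tail_eq {s : ℝ} (hs : 1 < s) (n : ℕ) :
    zetaR s - S s n = ∑' k : ℕ, (((k + n : ℕ) : ℝ) + 1) ^ (-s) := by
  have h := (summ hs).sum_add_tsum_nat_add n
  simp only [zetaR, S]
  linarith [h]

lemma S_le_zeta {s : ℝ} (hs : 1 < s) (n : ℕ) : S s n ≤ zetaR s :=
  Summable.sum_le_tsum (Finset.range n) (fun i _ => Real.rpow_nonneg (by positivity) _) (summ hs)

lemma S_lt_zeta {s : ℝ} (hs : 1 < s) (n : ℕ) : S s n < zetaR s := by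
  have h := tail_eq hs n
  have hpos : 0 < ∑' k : ℕ, (((k + n : ℕ) : ℝ) + 1) ^ (-s) := by
    refine Summable.tsum_pos ?_ (fun k => Real.rpow_nonneg (by positivity) _) 0
      (Real.rpow_pos_of_pos (by positivity) _)
    exact (summ hs).comp_injective (add_left_injective n)
  linarith

lemma one_le_S {s : ℝ} {n : ℕ} (hn : 1 ≤ n) : 1 ≤ S s n := by
  have h0 : ((0 : ℕ) : ℝ) + 1 = 1 := by norm_num
  have := Finset.single_le_sum (f := fun k : ℕ => ((k : ℝ) + 1) ^ (-s))
    (fun i _ => Real.rpow_nonneg (by positivity) _) (Finset.mem_range.mpr hn)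
  simpa [h0, S] using this

lemma tail_bound {s : ℝ} (hs : 1 < s) {n : ℕ} (hn : 1 ≤ n) :
    zetaR s - S s n ≤ (n : ℝ) ^ (1 - s) / (s - 1) := by
  rw [tail_eq hs n]
  apply Real.tsum_le_of_sum_range_le (fun k => Real.rpow_nonneg (by positivity) _)
  intro m
  have hterm : ∀ k ∈ Finset.range m, (((k + n : ℕ) : ℝ) + 1) ^ (-s) ≤
      (((k : ℝ) + n) ^ (1 - s) - (((k + 1 : ℕ) : ℝ) + n) ^ (1 - s)) / (s - 1) := by
    intro k _
    have h1 : (1 : ℝ) ≤ (k : ℝ) + (n : ℝ) := by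
      have : (1 : ℝ) ≤ (n : ℝ) := by exact_mod_cast hn
      have : (0 : ℝ) ≤ (k : ℝ) := Nat.cast_nonneg k
      push_cast; linarith [(by exact_mod_cast hn : (1:ℝ) ≤ (n:ℝ))]
    have := step hs h1
    push_cast
    convert this using 3 <;> push_cast <;> ring
  calc ∑ k ∈ Finset.range m, (((k + n : ℕ) : ℝ) + 1) ^ (-s)
      ≤ ∑ k ∈ Finset.range m,
        (((k : ℝ) + n) ^ (1 - s) - (((k + 1 : ℕ) : ℝ) + n) ^ (1 - s)) / (s - 1) :=
        Finset.sum_le_sum hterm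
    _ = (∑ k ∈ Finset.range m,
        (((k : ℝ) + n) ^ (1 - s) - (((k + 1 : ℕ) : ℝ) + n) ^ (1 - s))) / (s - 1) := by
        rw [Finset.sum_div]
    _ = ((((0 : ℕ) : ℝ) + n) ^ (1 - s) - (((m : ℕ) : ℝ) + n) ^ (1 - s)) / (s - 1) := by
        rw [Finset.sum_range_sub' (fun k : ℕ => ((k : ℝ) + n) ^ (1 - s))]
    _ ≤ (n : ℝ) ^ (1 - s) / (s - 1) := by
        have h1 : (0 : ℝ) ≤ ((m : ℝ) + n) ^ (1 - s) := Real.rpow_nonneg (by positivity) _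
        have : ((((0 : ℕ) : ℝ) + n)) = (n : ℝ) := by norm_num
        rw [this]
        gcongr
        · linarith

lemma taylor_bound {r : ℝ} (hr : 1 < r) {a b : ℝ} (h1 : 1 ≤ a) (hab : a < b) :
    |b ^ r - a ^ r - r * b ^ (r - 1) * (b - a)| ≤
      r * (r - 1) * max (b ^ (r - 2)) 1 * (b - a) ^ 2 := by
  have ha0 : (0 : ℝ) < a := by linarith
  have hb1 : (1 : ℝ) < b := lt_of_le_of_lt h1 hab
  -- first MVT on u ^ r
  have hcont1 : ContinuousOn (fun u : ℝ => u ^ r) (Set.Icc a b) := by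
    apply ContinuousOn.rpow_const continuousOn_id
    intro u hu; left; have := hu.1; simp only [id]; intro h; rw [h] at this; linarith
  have hderiv1 : ∀ u ∈ Set.Ioo a b,
      HasDerivAt (fun u : ℝ => u ^ r) (r * u ^ (r - 1)) u := fun u hu =>
    Real.hasDerivAt_rpow_const (Or.inl (by nlinarith [hu.1]))
  obtain ⟨c, hc, hceq⟩ := exists_hasDerivAt_eq_slope _ _ hab hcont1 hderiv1
  have hc1 : (1 : ℝ) < c := lt_of_le_of_lt h1 hc.1
  have hcb : c < b := hc.2
  have hkey1 : b ^ r - a ^ r = r * c ^ (r - 1) * (b - a) := by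
    have hba : b - a ≠ 0 := by linarith
    field_simp at hceq
    linarith [hceq]
  -- second MVT on u ^ (r - 1) over [c, b]
  have hcont2 : ContinuousOn (fun u : ℝ => u ^ (r - 1)) (Set.Icc c b) := by
    apply ContinuousOn.rpow_const continuousOn_id
    intro u hu; left; have := hu.1; simp only [id]; intro h; rw [h] at this; linarith
  have hderiv2 : ∀ u ∈ Set.Ioo c b,
      HasDerivAt (fun u : ℝ => u ^ (r - 1)) ((r - 1) * u ^ (r - 1 - 1)) u := fun u hu =>
    Real.hasDerivAt_rpow_const (Or.inl (by nlinarith [hu.1]))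
  obtain ⟨d, hd, hdeq⟩ := exists_hasDerivAt_eq_slope _ _ hcb hcont2 hderiv2
  have hd1 : (1 : ℝ) < d := lt_trans hc1 hd.1
  have hkey2 : b ^ (r - 1) - c ^ (r - 1) = (r - 1) * d ^ (r - 1 - 1) * (b - c) := by
    have hbc : b - c ≠ 0 := by linarith
    field_simp at hdeq
    linarith [hdeq]
  have hr2 : r - 1 - 1 = r - 2 := by ring
  rw [hr2] at hkey2
  -- bound d ^ (r - 2)
  have hdM : d ^ (r - 2) ≤ max (b ^ (r - 2)) 1 := by
    rcases le_or_gt 2 r with h | h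
    · exact le_max_of_le_left
        (Real.rpow_le_rpow (by linarith) (le_of_lt hd.2) (by linarith))
    · exact le_max_of_le_right
        (Real.rpow_le_one_of_one_le_of_nonpos (le_of_lt hd1) (by linarith))
  -- c ^ (r-1) ≤ b ^ (r-1)
  have hcbr : c ^ (r - 1) ≤ b ^ (r - 1) :=
    Real.rpow_le_rpow (by linarith) (le_of_lt hcb) (by linarith)
  have hE : b ^ r - a ^ r - r * b ^ (r - 1) * (b - a)
      = -(r * (b ^ (r - 1) - c ^ (r - 1)) * (b - a)) := by
    rw [hkey1]; ring
  rw [hE, abs_neg, abs_of_nonneg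
    (mul_nonneg (mul_nonneg (by linarith) (by linarith)) (by linarith))]
  have hM0 : (0 : ℝ) ≤ max (b ^ (r - 2)) 1 := le_max_of_le_right zero_le_one
  have h3 : b ^ (r - 1) - c ^ (r - 1) ≤ (r - 1) * max (b ^ (r - 2)) 1 * (b - a) := by
    rw [hkey2]
    calc (r - 1) * d ^ (r - 2) * (b - c)
        ≤ (r - 1) * max (b ^ (r - 2)) 1 * (b - c) :=
          mul_le_mul_of_nonneg_right
            (mul_le_mul_of_nonneg_left hdM (by linarith)) (by linarith [hd.1, hd.2])
      _ ≤ (r - 1) * max (b ^ (r - 2)) 1 * (b - a) :=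
          mul_le_mul_of_nonneg_left (by linarith [hc.1])
            (mul_nonneg (by linarith) hM0)
  calc r * (b ^ (r - 1) - c ^ (r - 1)) * (b - a)
      ≤ r * ((r - 1) * max (b ^ (r - 2)) 1 * (b - a)) * (b - a) :=
        mul_le_mul_of_nonneg_right
          (mul_le_mul_of_nonneg_left h3 (by linarith)) (by linarith)
    _ = r * (r - 1) * max (b ^ (r - 2)) 1 * (b - a) ^ 2 := by ring

theorem stmt12 (p q : ℝ) (hp : 1 < p) (hpq : p < q) :
    ∃ C > (0 : ℝ), ∃ N : ℕ, ∀ n ≥ N,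
      |(zetaR p ^ (q / p) - D p q n) - zetaR q -
        (q / p) * zetaR p ^ (q / p - 1) * (zetaR p - S p n)| ≤
        C * (n : ℝ) ^ (-(min (2 * p - 2) (q - 1))) := by
  have hp0 : (0 : ℝ) < p := by linarith
  have hr : 1 < q / p := (one_lt_div hp0).mpr hpq
  have hq : 1 < q := lt_trans hp hpq
  set r : ℝ := q / p with hrdef
  set M : ℝ := max (zetaR p ^ (r - 2)) 1 with hMdef
  have hM1 : (1 : ℝ) ≤ M := le_max_right _ _
  have hCpos : (0 : ℝ) < r * (r - 1) * M / (p - 1) ^ 2 + 1 / (q - 1) := by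
    have h1 : (0 : ℝ) < r * (r - 1) * M := mul_pos (mul_pos (by linarith) (by linarith)) (by linarith)
    have h2 : (0 : ℝ) < (p - 1) ^ 2 := pow_pos (by linarith) 2
    have := div_pos h1 h2
    have h3 : (0 : ℝ) < 1 / (q - 1) := div_pos one_pos (by linarith)
    linarith
  refine ⟨r * (r - 1) * M / (p - 1) ^ 2 + 1 / (q - 1), hCpos, 1, fun n hn => ?_⟩
  have hn1 : (1 : ℝ) ≤ (n : ℝ) := by exact_mod_cast hn
  have hn0 : (0 : ℝ) < (n : ℝ) := by linarith
  have ha1 : 1 ≤ S p n := one_le_S hn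
  have hab : S p n < zetaR p := S_lt_zeta hp n
  have hT := taylor_bound hr ha1 hab
  have htp := tail_bound hp hn
  have htp0 : (0 : ℝ) ≤ zetaR p - S p n := by linarith
  have htq := tail_bound hq hn
  have htq0 : (0 : ℝ) ≤ zetaR q - S q n := sub_nonneg.mpr (S_le_zeta hq n)
  set m : ℝ := min (2 * p - 2) (q - 1) with hmdef
  have hexp1 : (n : ℝ) ^ (2 - 2 * p) ≤ (n : ℝ) ^ (-m) :=
    Real.rpow_le_rpow_of_exponent_le hn1
      (by have := min_le_left (2 * p - 2) (q - 1); simp only [hmdef]; linarith)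
  have hexp2 : (n : ℝ) ^ (1 - q) ≤ (n : ℝ) ^ (-m) :=
    Real.rpow_le_rpow_of_exponent_le hn1
      (by have := min_le_right (2 * p - 2) (q - 1); simp only [hmdef]; linarith)
  have hsplit : (zetaR p ^ r - D p q n) - zetaR q - r * zetaR p ^ (r - 1) * (zetaR p - S p n)
      = (zetaR p ^ r - (S p n) ^ r - r * zetaR p ^ (r - 1) * (zetaR p - S p n))
        - (zetaR q - S q n) := by
    simp only [D]; ring
  rw [hsplit]
  have hrM0 : (0 : ℝ) ≤ r * (r - 1) * M := le_of_lt (mul_pos (mul_pos (by linarith) (by linarith)) (by linarith))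
  have ht2 : (zetaR p - S p n) ^ 2 ≤ ((n : ℝ) ^ (1 - p) / (p - 1)) ^ 2 :=
    pow_le_pow_left₀ htp0 htp 2
  have hpow : ((n : ℝ) ^ (1 - p) / (p - 1)) ^ 2 = (n : ℝ) ^ (2 - 2 * p) / (p - 1) ^ 2 := by
    rw [div_pow, sq ((n:ℝ) ^ (1 - p)), ← Real.rpow_add hn0]
    ring_nf
  calc |(zetaR p ^ r - (S p n) ^ r - r * zetaR p ^ (r - 1) * (zetaR p - S p n))
        - (zetaR q - S q n)|
      ≤ |zetaR p ^ r - (S p n) ^ r - r * zetaR p ^ (r - 1) * (zetaR p - S p n)|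
        + |zetaR q - S q n| := abs_sub _ _
    _ ≤ r * (r - 1) * M * ((n : ℝ) ^ (2 - 2 * p) / (p - 1) ^ 2)
        + (n : ℝ) ^ (1 - q) / (q - 1) := by
        rw [abs_of_nonneg htq0]
        have h4 := hT.trans (mul_le_mul_of_nonneg_left (ht2.trans_eq hpow) hrM0)
        linarith
    _ ≤ r * (r - 1) * M / (p - 1) ^ 2 * (n : ℝ) ^ (-m)
        + 1 / (q - 1) * (n : ℝ) ^ (-m) := by
        have h5 : r * (r - 1) * M * ((n : ℝ) ^ (2 - 2 * p) / (p - 1) ^ 2)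
            = r * (r - 1) * M / (p - 1) ^ 2 * (n : ℝ) ^ (2 - 2 * p) := by ring
        rw [h5]
        have h6 : r * (r - 1) * M / (p - 1) ^ 2 * (n : ℝ) ^ (2 - 2 * p)
            ≤ r * (r - 1) * M / (p - 1) ^ 2 * (n : ℝ) ^ (-m) :=
          mul_le_mul_of_nonneg_left hexp1 (div_nonneg hrM0 (by positivity))
        have h7 : (n : ℝ) ^ (1 - q) / (q - 1) ≤ 1 / (q - 1) * (n : ℝ) ^ (-m) := by
          rw [div_eq_mul_inv, one_div, mul_comm ((q - 1)⁻¹)]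
          exact mul_le_mul_of_nonneg_right hexp2 (inv_nonneg.mpr (by linarith))
        linarith
    _ = (r * (r - 1) * M / (p - 1) ^ 2 + 1 / (q - 1)) * (n : ℝ) ^ (-m) := by ring
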